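/- (Infinite-expert Hedge, asymptotic regret) Let $(\mathcal{Y},\ell)$ be a metric space with diameter at most 1. Let $y_1,y_2,\dots\in\mathcal{Y}$ and for each $t$ let $\{z_{t,i}\}_{i\ge1}\subseteq\mathcal{Y}$. Partition time into blocks $T_j$ of length $j$ (with $T_1=\{1\}$, $T_{j+1}$ immediately following $T_j$), and within block $T_j$ run the Hedge forecaster over experts $\{1,\dots,j\}$ with learning rate $\eta_j=\sqrt{(8/j)\ln j}$, restarting weights uniformly at the start of each block, producing randomized predictions $\hat z_t$. Then with probability one there exists $\hat n\in\mathbb{N}$ such that for all $n>\hat n$: $\sum_{t=1}^n\ell(\hat z_t,y_t) \le \min_{1\le i\le n^{1/4}}\sum_{t=1}^n\ell(z_{t,i},y_t) + 19\,n^{3/4}\sqrt{\ln n} + \hat n$. -/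

import Mathlib

set_option linter.unusedVariables false
set_option linter.unusedSectionVars false


open Finset

lemma le_of_sq_le_sq' {a b : ℝ} (ha : 0 ≤ a) (hb : 0 ≤ b) (h : a^2 ≤ b^2) : a ≤ b := by
  nlinarith

lemma exp_le_one_sub_mul {η x : ℝ} (hη : 0 ≤ η) (hx0 : 0 ≤ x) (hx1 : x ≤ 1) :
    Real.exp (-η * x) ≤ 1 - (1 - Real.exp (-η)) * x := by
  have h := convexOn_exp.2 (Set.mem_univ (-η)) (Set.mem_univ 0) hx0 (by linarith : (0:ℝ) ≤ 1 - x)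
    (by ring)
  simp only [smul_eq_mul, mul_zero, add_zero, Real.exp_zero] at h
  have : x * -η = -η * x := by ring
  rw [this] at h
  linarith

lemma hedge_core (j a n : ℕ) (η : ℝ) (ℓ : ℕ → ℕ → ℝ) (hj : 1 ≤ j) (hη : 0 < η)
    (hblock : n + 1 ≤ a + j)
    (hℓ0 : ∀ t i, 0 ≤ ℓ t i) (hℓ1 : ∀ t i, ℓ t i ≤ 1) (i : ℕ) (hi : i ∈ Finset.Icc 1 j) :
    ∑ t ∈ Finset.Icc a n, (∑ i' ∈ Finset.Icc 1 j,
        (Real.exp (-η * ∑ s ∈ Finset.Ico a t, ℓ s i') /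
          ∑ i'' ∈ Finset.Icc 1 j, Real.exp (-η * ∑ s ∈ Finset.Ico a t, ℓ s i'')) * ℓ t i')
      ≤ (∑ t ∈ Finset.Icc a n, ℓ t i) + (η * j + Real.log j / η + Real.log j) := by
  rcases lt_or_ge n a with hna | han
  · rw [Finset.Icc_eq_empty (by omega)]
    simp only [Finset.sum_empty]
    have h1 : 0 ≤ Real.log j := Real.log_nonneg (by exact_mod_cast hj)
    have : (0:ℝ) ≤ η * j := by positivity
    have : (0:ℝ) ≤ Real.log j / η := by positivity
    linarith
  set F : ℕ → ℕ → ℝ := fun t i' => Real.exp (-η * ∑ s ∈ Finset.Ico a t, ℓ s i') with hF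
  set W : ℕ → ℝ := fun t => ∑ i' ∈ Finset.Icc 1 j, F t i' with hWdef
  set q : ℕ → ℝ := fun t => ∑ i' ∈ Finset.Icc 1 j, (F t i' / W t) * ℓ t i' with hq
  have hFpos : ∀ t i', 0 < F t i' := fun t i' => Real.exp_pos _
  have hWpos : ∀ t, 0 < W t := fun t =>
    Finset.sum_pos (fun i' _ => hFpos t i') ⟨1, by simp [hj]⟩
  have hq0 : ∀ t, 0 ≤ q t := fun t =>
    Finset.sum_nonneg fun i' _ => mul_nonneg (div_nonneg (hFpos t i').le (hWpos t).le) (hℓ0 t i')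
  have hq1 : ∀ t, q t ≤ 1 := by
    intro t
    have : q t ≤ ∑ i' ∈ Finset.Icc 1 j, (F t i' / W t) := by
      apply Finset.sum_le_sum
      intro i' _
      nlinarith [hℓ1 t i', hℓ0 t i', div_nonneg (hFpos t i').le (hWpos t).le]
    calc q t ≤ ∑ i' ∈ Finset.Icc 1 j, (F t i' / W t) := this
      _ = 1 := by rw [← Finset.sum_div]; exact div_self (hWpos t).ne'
  set c : ℝ := 1 - Real.exp (-η) with hcdef
  have hc0 : 0 < c := by
    have : Real.exp (-η) < 1 := Real.exp_lt_one_iff.mpr (by linarith)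
    linarith
  have hc1 : c < 1 := by
    have := Real.exp_pos (-η); linarith
  -- per-step bound
  have step : ∀ t, a ≤ t → W (t + 1) ≤ W t * (1 - c * q t) := by
    intro t hat
    have hWq : W t * q t = ∑ i' ∈ Finset.Icc 1 j, F t i' * ℓ t i' := by
      rw [hq, Finset.mul_sum]
      apply Finset.sum_congr rfl
      intro i' _
      field_simp
      rw [mul_assoc, mul_div_cancel_left₀ _ (hWpos t).ne']
    have hWt1 : W (t + 1) = ∑ i' ∈ Finset.Icc 1 j, F t i' * Real.exp (-η * ℓ t i') := by
      apply Finset.sum_congr rfl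
      intro i' _
      rw [hF]
      simp only
      rw [Finset.sum_Ico_succ_top hat, mul_add, Real.exp_add]
    rw [hWt1]
    have : ∑ i' ∈ Finset.Icc 1 j, F t i' * Real.exp (-η * ℓ t i')
        ≤ ∑ i' ∈ Finset.Icc 1 j, F t i' * (1 - c * ℓ t i') := by
      apply Finset.sum_le_sum
      intro i' _
      exact mul_le_mul_of_nonneg_left
        (exp_le_one_sub_mul hη.le (hℓ0 t i') (hℓ1 t i')) (hFpos t i').le
    calc ∑ i' ∈ Finset.Icc 1 j, F t i' * Real.exp (-η * ℓ t i')
        ≤ ∑ i' ∈ Finset.Icc 1 j, F t i' * (1 - c * ℓ t i') := this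
      _ = W t - c * (W t * q t) := by
          rw [hWq, Finset.mul_sum, ← Finset.sum_sub_distrib]
          apply Finset.sum_congr rfl
          intro i' _
          ring
      _ = W t * (1 - c * q t) := by ring
  have logstep : ∀ t, a ≤ t → Real.log (W (t + 1)) ≤ Real.log (W t) - c * q t := by
    intro t hat
    have h1 : 0 < 1 - c * q t := by nlinarith [hq0 t, hq1 t]
    calc Real.log (W (t + 1)) ≤ Real.log (W t * (1 - c * q t)) :=
          Real.log_le_log (hWpos _) (step t hat)
      _ = Real.log (W t) + Real.log (1 - c * q t) := Real.log_mul (hWpos t).ne' h1.ne'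
      _ ≤ Real.log (W t) + (1 - c * q t - 1) := by
          linarith [Real.log_le_sub_one_of_pos h1]
      _ = Real.log (W t) - c * q t := by ring
  have tele : ∀ b : ℕ, Real.log (W (a + b)) ≤ Real.log (W a) - c * ∑ t ∈ Finset.Ico a (a + b), q t := by
    intro b
    induction b with
    | zero => simp
    | succ b ih =>
      have h1 : a + (b + 1) = (a + b) + 1 := by ring
      rw [h1, Finset.sum_Ico_succ_top (by omega : a ≤ a + b)]
      have := logstep (a + b) (by omega)
      nlinarith [this, ih]
  have htele := tele (n + 1 - a)
  rw [(by omega : a + (n + 1 - a) = n + 1), Finset.Ico_add_one_right_eq_Icc] at htele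
  have hWa : W a = j := by
    rw [hWdef]
    simp only [hF]
    rw [Finset.sum_congr rfl (fun i' _ => by rw [Finset.Ico_self, Finset.sum_empty, mul_zero, Real.exp_zero])]
    simp
  set L : ℝ := ∑ s ∈ Finset.Icc a n, ℓ s i with hLdef
  have hL0 : 0 ≤ L := Finset.sum_nonneg fun s _ => hℓ0 s i
  have hLj : L ≤ j := by
    calc L ≤ ∑ s ∈ Finset.Icc a n, (1:ℝ) := Finset.sum_le_sum fun s _ => hℓ1 s i
      _ = (Finset.Icc a n).card := by simp
      _ ≤ j := by
        rw [Nat.card_Icc]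
        exact_mod_cast (by omega : n + 1 - a ≤ j)
  have hlow : -η * L ≤ Real.log (W (n + 1)) := by
    have hle : Real.exp (-η * L) ≤ W (n + 1) := by
      have : F (n + 1) i = Real.exp (-η * L) := by
        rw [hF]; simp only; rw [Finset.Ico_add_one_right_eq_Icc]
      rw [← this]
      exact Finset.single_le_sum (fun i' _ => (hFpos _ i').le) hi
    calc -η * L = Real.log (Real.exp (-η * L)) := (Real.log_exp _).symm
      _ ≤ Real.log (W (n + 1)) := Real.log_le_log (Real.exp_pos _) hle
  have hlogj : 0 ≤ Real.log j := Real.log_nonneg (by exact_mod_cast hj)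
  -- c ≥ η / (1 + η)
  have hcge : η ≤ c * (1 + η) := by
    have h1 : η + 1 ≤ Real.exp η := Real.add_one_le_exp η
    have h2 : Real.exp (-η) * Real.exp η = 1 := by
      rw [← Real.exp_add]; simp
    have h3 := Real.exp_pos (-η)
    nlinarith
  set Q : ℝ := ∑ t ∈ Finset.Icc a n, q t with hQdef
  have hQ : c * Q ≤ Real.log j + η * L := by
    rw [hWa] at htele
    nlinarith [hlow, htele]
  have hQ0 : 0 ≤ Q := Finset.sum_nonneg fun t _ => hq0 t
  -- Q ≤ (log j + η L)(1+η)/η = L + ηL + log j/η + log j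
  have key : Q ≤ L + (η * L + Real.log j / η + Real.log j) := by
    have h1 : Q * η ≤ (Real.log j + η * L) * (1 + η) := by
      nlinarith [hQ, hcge, hc0, mul_nonneg hlogj hL0]
    have h2 : Real.log j / η * η = Real.log j := div_mul_cancel₀ _ hη.ne'
    nlinarith [mul_pos hη hη]
  have hfin : Q ≤ L + (η * j + Real.log j / η + Real.log j) := by
    nlinarith [key, hLj, hη]
  exact hfin


open Finset

section Tseq
variable (tseq : ℕ → ℕ) (ht1 : tseq 1 = 1) (htsucc : ∀ j ≥ 1, tseq (j + 1) = tseq j + j)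

include ht1 htsucc

lemma tseq_mono : ∀ a b : ℕ, 1 ≤ a → a ≤ b → tseq a ≤ tseq b := by
  intro a b ha hab
  induction b with
  | zero => omega
  | succ b ih =>
    rcases Nat.lt_or_ge a (b + 1) with h | h
    · have hb : 1 ≤ b := by omega
      have := htsucc b hb
      have := ih (by omega)
      omega
    · have : a = b + 1 := by omega
      subst this
      exact le_rfl

lemma tseq_ge_one : ∀ j, 1 ≤ j → 1 ≤ tseq j := by
  intro j hj
  have := tseq_mono tseq ht1 htsucc 1 j le_rfl hj
  omega

lemma tseq_ge_self : ∀ j, 1 ≤ j → j ≤ tseq j := by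
  intro j hj
  induction j with
  | zero => omega
  | succ j ih =>
    rcases Nat.lt_or_ge 1 (j + 1) with h | h
    · have hj1 : 1 ≤ j := by omega
      have := htsucc j hj1
      have := ih hj1
      omega
    · have : j = 0 := by omega
      subst this
      simp [ht1]

lemma tseq_le_sq : ∀ j, 1 ≤ j → tseq j ≤ j * j := by
  intro j hj
  induction j with
  | zero => omega
  | succ j ih =>
    rcases Nat.lt_or_ge 1 (j + 1) with h | h
    · have hj1 : 1 ≤ j := by omega
      have := htsucc j hj1
      have := ih hj1
      nlinarith
    · have : j = 0 := by omega
      subst this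
      simp [ht1]

lemma tseq_lb : ∀ j, 1 ≤ j → (j - 1) * (j - 1) ≤ 2 * tseq j := by
  intro j hj
  induction j with
  | zero => omega
  | succ j ih =>
    rcases Nat.lt_or_ge 1 (j + 1) with h | h
    · have hj1 : 1 ≤ j := by omega
      obtain ⟨k, rfl⟩ : ∃ k, j = k + 1 := ⟨j - 1, by omega⟩
      have h1 := htsucc (k + 1) hj1
      have h2 := ih hj1
      simp only [Nat.add_sub_cancel] at h2 ⊢
      nlinarith
    · have : j = 0 := by omega
      subst this
      simp [ht1]

lemma jb_eq (jb : ℕ → ℕ)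
    (hjb : ∀ t ≥ 1, 1 ≤ jb t ∧ tseq (jb t) ≤ t ∧ t < tseq (jb t + 1)) :
    ∀ j, 1 ≤ j → ∀ t, tseq j ≤ t → t < tseq (j + 1) → jb t = j := by
  intro j hj t hta htb
  have ht1' : 1 ≤ t := le_trans (tseq_ge_one tseq ht1 htsucc j hj) hta
  obtain ⟨h1, h2, h3⟩ := hjb t ht1'
  by_contra hne
  rcases Nat.lt_or_ge (jb t) j with h | h
  · have : tseq (jb t + 1) ≤ tseq j := tseq_mono tseq ht1 htsucc _ _ (by omega) (by omega)
    omega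
  · have hlt : j < jb t := by omega
    have : tseq (j + 1) ≤ tseq (jb t) := tseq_mono tseq ht1 htsucc _ _ (by omega) (by omega)
    omega

end Tseq

open Finset

lemma le_of_sq_le_sq'' {a b : ℝ} (ha : 0 ≤ a) (hb : 0 ≤ b) (h : a^2 ≤ b^2) : a ≤ b := by
  nlinarith

lemma eta_bound (j : ℕ) (hj : 2 ≤ j) :
    Real.sqrt (8 / (j:ℝ) * Real.log j) * j + Real.log j / Real.sqrt (8 / (j:ℝ) * Real.log j)
      + Real.log j ≤ 5 * Real.sqrt ((j:ℝ) * Real.log j) := by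
  set jR : ℝ := (j : ℝ) with hjR
  have hjR2 : (2:ℝ) ≤ jR := by rw [hjR]; exact_mod_cast hj
  have hjR0 : 0 < jR := by linarith
  set L : ℝ := Real.log jR with hLdef
  have hL : 0 < L := Real.log_pos (by linarith)
  set η : ℝ := Real.sqrt (8 / jR * L) with hηdef
  have harg : 0 < 8 / jR * L := by positivity
  have hη0 : 0 < η := Real.sqrt_pos.mpr harg
  have hη2 : η ^ 2 = 8 / jR * L := Real.sq_sqrt harg.le
  set S : ℝ := Real.sqrt (jR * L) with hSdef
  have hS2 : S ^ 2 = jR * L := Real.sq_sqrt (by positivity)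
  have hS0 : 0 ≤ S := Real.sqrt_nonneg _
  have h8 : η ^ 2 * jR = 8 * L := by rw [hη2]; field_simp
  -- a) η * jR ≤ 3 * S
  have ha : η * jR ≤ 3 * S := by
    apply le_of_sq_le_sq'' (by positivity) (by positivity)
    have : (η * jR) ^ 2 = (η ^ 2 * jR) * jR := by ring
    rw [this, h8]
    nlinarith
  -- b) L / η ≤ S
  have hb : L / η ≤ S := by
    set u : ℝ := L / η with hu_def
    have hu : u * η = L := div_mul_cancel₀ _ hη0.ne'
    have hu0 : 0 ≤ u := by positivity
    have huu : u ^ 2 * η ^ 2 = L ^ 2 := by rw [← mul_pow, hu]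
    have e1 : u ^ 2 * (8 * L) = L ^ 2 * jR := by
      calc u ^ 2 * (8 * L) = u ^ 2 * (η ^ 2 * jR) := by rw [h8]
        _ = (u ^ 2 * η ^ 2) * jR := by ring
        _ = L ^ 2 * jR := by rw [huu]
    apply le_of_sq_le_sq'' hu0 hS0
    nlinarith
  -- c) L ≤ S
  have hc : L ≤ S := by
    have hLj : L ≤ jR := by
      have := Real.log_le_sub_one_of_pos hjR0
      linarith
    apply le_of_sq_le_sq'' hL.le hS0
    nlinarith
  linarith

noncomputable def hedgeR (j i : ℕ) : ℝ := if i ≤ j then 5 * Real.sqrt ((j:ℝ) * Real.log j) else (j:ℝ)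

lemma hedgeR_nonneg (j i : ℕ) : 0 ≤ hedgeR j i := by
  unfold hedgeR
  split
  · positivity
  · positivity

lemma hedgeR_sum (J i : ℕ) (hJ : 1 ≤ J) (hi : 1 ≤ i) :
    ∑ j ∈ Finset.Icc 1 J, hedgeR j i
      ≤ (i:ℝ) * i + 5 * J * Real.sqrt ((J:ℝ) * Real.log J) := by
  have h1 : ∀ j ∈ Finset.Icc 1 J, hedgeR j i
      ≤ (if j < i then (j:ℝ) else 0) + 5 * Real.sqrt ((j:ℝ) * Real.log j) := by
    intro j hj
    unfold hedgeR
    split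
    · have : ¬ (j < i) := by omega
      simp [this]
    · have : j < i := by omega
      simp only [this, if_true]
      have : 0 ≤ 5 * Real.sqrt ((j:ℝ) * Real.log j) := by positivity
      linarith
  calc ∑ j ∈ Finset.Icc 1 J, hedgeR j i
      ≤ ∑ j ∈ Finset.Icc 1 J, ((if j < i then (j:ℝ) else 0) + 5 * Real.sqrt ((j:ℝ) * Real.log j)) :=
        Finset.sum_le_sum h1
    _ = (∑ j ∈ Finset.Icc 1 J, if j < i then (j:ℝ) else 0)
        + ∑ j ∈ Finset.Icc 1 J, 5 * Real.sqrt ((j:ℝ) * Real.log j) := Finset.sum_add_distrib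
    _ ≤ (i:ℝ) * i + 5 * J * Real.sqrt ((J:ℝ) * Real.log J) := by
        gcongr ?_ + ?_
        · rw [← Finset.sum_filter]
          have hsub : (Finset.Icc 1 J).filter (· < i) ⊆ Finset.Icc 1 (i - 1) := by
            intro x hx
            simp only [Finset.mem_filter, Finset.mem_Icc] at hx ⊢
            omega
          calc ∑ j ∈ (Finset.Icc 1 J).filter (· < i), (j:ℝ)
              ≤ ∑ j ∈ Finset.Icc 1 (i - 1), (j:ℝ) :=
                Finset.sum_le_sum_of_subset_of_nonneg hsub (fun x _ _ => by positivity)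
            _ ≤ (Finset.Icc 1 (i - 1)).card • (i:ℝ) := by
                apply Finset.sum_le_card_nsmul
                intro x hx
                simp only [Finset.mem_Icc] at hx
                exact_mod_cast (by omega : x ≤ i)
            _ ≤ (i:ℝ) * i := by
                rw [Nat.card_Icc, nsmul_eq_mul]
                have : ((i - 1 + 1 - 1 : ℕ) : ℝ) ≤ (i : ℝ) := by exact_mod_cast (by omega : i - 1 + 1 - 1 ≤ i)
                nlinarith [(Nat.cast_nonneg i : (0:ℝ) ≤ (i:ℝ))]
        · have h2 : ∀ j ∈ Finset.Icc 1 J, 5 * Real.sqrt ((j:ℝ) * Real.log j)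
              ≤ 5 * Real.sqrt ((J:ℝ) * Real.log J) := by
            intro j hj
            simp only [Finset.mem_Icc] at hj
            have harg : (j:ℝ) * Real.log j ≤ (J:ℝ) * Real.log J := by
              have hj1 : (1:ℝ) ≤ (j:ℝ) := by exact_mod_cast hj.1
              have hjJ : (j:ℝ) ≤ (J:ℝ) := by exact_mod_cast hj.2
              have hlog1 : 0 ≤ Real.log j := Real.log_nonneg hj1
              have hlog2 : Real.log j ≤ Real.log J := Real.log_le_log (by linarith) hjJ
              nlinarith
            have := Real.sqrt_le_sqrt harg
            linarith
          calc ∑ j ∈ Finset.Icc 1 J, 5 * Real.sqrt ((j:ℝ) * Real.log j)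
              ≤ ∑ _j ∈ Finset.Icc 1 J, 5 * Real.sqrt ((J:ℝ) * Real.log J) := Finset.sum_le_sum h2
            _ = (Finset.Icc 1 J).card * (5 * Real.sqrt ((J:ℝ) * Real.log J)) := by
                rw [Finset.sum_const, nsmul_eq_mul]
            _ = (J:ℝ) * (5 * Real.sqrt ((J:ℝ) * Real.log J)) := by
                rw [Nat.card_Icc]
                norm_num
            _ = 5 * J * Real.sqrt ((J:ℝ) * Real.log J) := by ring

open Finset

section Det
variable (tseq : ℕ → ℕ) (ht1 : tseq 1 = 1) (htsucc : ∀ j ≥ 1, tseq (j + 1) = tseq j + j)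

variable (jb : ℕ → ℕ) (hjb : ∀ t ≥ 1, 1 ≤ jb t ∧ tseq (jb t) ≤ t ∧ t < tseq (jb t + 1))
    (η : ℕ → ℝ) (hη : ∀ j ≥ 1, η j = Real.sqrt ((8 / (j : ℝ)) * Real.log j))
    (ℓ : ℕ → ℕ → ℝ) (hℓ0 : ∀ t i, 0 ≤ ℓ t i) (hℓ1 : ∀ t i, ℓ t i ≤ 1)
    (w v : ℕ → ℕ → ℝ)
    (hw : ∀ t ≥ 1, ∀ i, w t i = (1 / (jb t : ℝ)) *
        Real.exp (-(η (jb t)) * ∑ s ∈ Finset.Icc (tseq (jb t)) (t - 1), ℓ s i))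
    (hv : ∀ t ≥ 1, ∀ i, v t i = w t i / ∑ i' ∈ Finset.Icc 1 (jb t), w t i')

include hjb hw in
lemma wpos : ∀ t, 1 ≤ t → ∀ i, 0 < w t i := by
  intro t ht i
  rw [hw t ht i]
  have h1 := (hjb t ht).1
  have : (0:ℝ) < (jb t : ℝ) := by exact_mod_cast h1
  have : (0:ℝ) < 1 / (jb t : ℝ) := by positivity
  exact mul_pos this (Real.exp_pos _)

include hjb hw hv in
lemma wsum_pos : ∀ t, 1 ≤ t → 0 < ∑ i' ∈ Finset.Icc 1 (jb t), w t i' := by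
  intro t ht
  exact Finset.sum_pos (fun i' _ => wpos tseq jb hjb η ℓ w hw t ht i')
    ⟨1, Finset.mem_Icc.mpr ⟨le_rfl, (hjb t ht).1⟩⟩

include hjb hw hv in
lemma vsum_one : ∀ t, 1 ≤ t → ∑ i' ∈ Finset.Icc 1 (jb t), v t i' = 1 := by
  intro t ht
  rw [Finset.sum_congr rfl (fun i' _ => hv t ht i'), ← Finset.sum_div]
  exact div_self (wsum_pos tseq jb hjb η ℓ w v hw hv t ht).ne'

include hjb hw hv in
lemma vnonneg : ∀ t, 1 ≤ t → ∀ i, 0 ≤ v t i := by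
  intro t ht i
  rw [hv t ht i]
  exact div_nonneg (wpos tseq jb hjb η ℓ w hw t ht i).le
    (wsum_pos tseq jb hjb η ℓ w v hw hv t ht).le

include ht1 htsucc hjb hη hℓ0 hℓ1 hw hv in
lemma block_bound : ∀ j, 1 ≤ j → ∀ n, tseq j ≤ n → n < tseq (j + 1) → ∀ i, 1 ≤ i →
    ∑ t ∈ Finset.Icc (tseq j) n, ((∑ i' ∈ Finset.Icc 1 (jb t), v t i' * ℓ t i') - ℓ t i)
      ≤ hedgeR j i := by
  intro j hj n hn1 hn2 i hi
  have hblocklen : n + 1 ≤ tseq j + j := by have := htsucc j hj; omega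
  have hjbt : ∀ t, tseq j ≤ t → t ≤ n → jb t = j := fun t h1 h2 =>
    jb_eq tseq ht1 htsucc jb hjb j hj t h1 (by omega)
  have htge1 : ∀ t, tseq j ≤ t → 1 ≤ t := fun t h =>
    le_trans (tseq_ge_one tseq ht1 htsucc j hj) h
  by_cases hij : i ≤ j
  · unfold hedgeR
    rw [if_pos hij]
    by_cases hj1 : j = 1
    · subst hj1
      have hi1 : i = 1 := by omega
      subst hi1
      have hzero : ∀ t ∈ Finset.Icc (tseq 1) n,
          (∑ i' ∈ Finset.Icc 1 (jb t), v t i' * ℓ t i') - ℓ t 1 = 0 := by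
        intro t ht
        rw [Finset.mem_Icc] at ht
        have hjbt' := hjbt t ht.1 ht.2
        have h1t := htge1 t ht.1
        rw [hjbt', Finset.Icc_self, Finset.sum_singleton]
        have hv1 : v t 1 = 1 := by
          rw [hv t h1t 1, hjbt', Finset.Icc_self, Finset.sum_singleton]
          exact div_self (wpos tseq jb hjb η ℓ w hw t h1t 1).ne'
        rw [hv1]
        ring
      rw [Finset.sum_congr rfl hzero]
      simp
    · have hj2 : 2 ≤ j := by omega
      have hηj : η j = Real.sqrt (8 / (j:ℝ) * Real.log j) := hη j hj
      have hlogpos : (0:ℝ) < Real.log j := Real.log_pos (by exact_mod_cast hj2)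
      have hηpos : 0 < η j := by
        rw [hηj]
        apply Real.sqrt_pos.mpr
        have : (0:ℝ) < (j:ℝ) := by positivity
        positivity
      have hveq : ∀ t, tseq j ≤ t → t ≤ n → ∀ i', v t i' =
          Real.exp (-(η j) * ∑ s ∈ Finset.Ico (tseq j) t, ℓ s i') /
            ∑ i'' ∈ Finset.Icc 1 j, Real.exp (-(η j) * ∑ s ∈ Finset.Ico (tseq j) t, ℓ s i'') := by
        intro t h1 h2 i'
        have hjbt' := hjbt t h1 h2
        have h1t := htge1 t h1
        have hIcc : Finset.Icc (tseq j) (t - 1) = Finset.Ico (tseq j) t := by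
          rw [← Finset.Ico_add_one_right_eq_Icc]
          congr 1
          omega
        rw [hv t h1t i']
        simp only [hw t h1t, hjbt', hIcc]
        rw [← Finset.mul_sum]
        have hj0 : (1 / (j:ℝ)) ≠ 0 := by
          have : (0:ℝ) < (j:ℝ) := by exact_mod_cast hj
          positivity
        rw [mul_div_mul_left _ _ hj0]
      have hcore := hedge_core j (tseq j) n (η j) ℓ hj hηpos hblocklen hℓ0 hℓ1 i
        (Finset.mem_Icc.mpr ⟨hi, hij⟩)
      have hconv : ∑ t ∈ Finset.Icc (tseq j) n, (∑ i' ∈ Finset.Icc 1 (jb t), v t i' * ℓ t i') =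
          ∑ t ∈ Finset.Icc (tseq j) n, ∑ i' ∈ Finset.Icc 1 j,
            (Real.exp (-(η j) * ∑ s ∈ Finset.Ico (tseq j) t, ℓ s i') /
              ∑ i'' ∈ Finset.Icc 1 j, Real.exp (-(η j) * ∑ s ∈ Finset.Ico (tseq j) t, ℓ s i'')) * ℓ t i' := by
        apply Finset.sum_congr rfl
        intro t ht
        rw [Finset.mem_Icc] at ht
        rw [hjbt t ht.1 ht.2]
        exact Finset.sum_congr rfl fun i' _ => by rw [hveq t ht.1 ht.2 i']
      rw [Finset.sum_sub_distrib, hconv]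
      have hfinal := eta_bound j hj2
      rw [← hηj] at hfinal
      linarith
  · unfold hedgeR
    rw [if_neg hij]
    have hone : ∀ t ∈ Finset.Icc (tseq j) n,
        (∑ i' ∈ Finset.Icc 1 (jb t), v t i' * ℓ t i') - ℓ t i ≤ 1 := by
      intro t ht
      rw [Finset.mem_Icc] at ht
      have h1t := htge1 t ht.1
      have hm : ∑ i' ∈ Finset.Icc 1 (jb t), v t i' * ℓ t i' ≤ 1 := by
        calc ∑ i' ∈ Finset.Icc 1 (jb t), v t i' * ℓ t i'
            ≤ ∑ i' ∈ Finset.Icc 1 (jb t), v t i' := by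
              apply Finset.sum_le_sum
              intro i' _
              nlinarith [vnonneg tseq jb hjb η ℓ w v hw hv t h1t i', hℓ1 t i', hℓ0 t i']
          _ = 1 := vsum_one tseq jb hjb η ℓ w v hw hv t h1t
      linarith [hℓ0 t i]
    calc ∑ t ∈ Finset.Icc (tseq j) n, ((∑ i' ∈ Finset.Icc 1 (jb t), v t i' * ℓ t i') - ℓ t i)
        ≤ ∑ _t ∈ Finset.Icc (tseq j) n, (1:ℝ) := Finset.sum_le_sum hone
      _ = ((Finset.Icc (tseq j) n).card : ℝ) := by simp
      _ ≤ (j:ℝ) := by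
          rw [Nat.card_Icc]
          exact_mod_cast (by omega : n + 1 - tseq j ≤ j)

include ht1 htsucc hjb hη hℓ0 hℓ1 hw hv in
lemma det_global : ∀ n, 1 ≤ n → ∀ i, 1 ≤ i →
    ∑ t ∈ Finset.Icc 1 n, ((∑ i' ∈ Finset.Icc 1 (jb t), v t i' * ℓ t i') - ℓ t i)
      ≤ ∑ j ∈ Finset.Icc 1 (jb n), hedgeR j i := by
  intro n
  induction n using Nat.strong_induction_on with
  | _ n ih =>
  intro hn i hi
  obtain ⟨hj1, hja, hjbnd⟩ := hjb n hn
  have ha1 : 1 ≤ tseq (jb n) := tseq_ge_one tseq ht1 htsucc (jb n) hj1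
  have hblock := block_bound tseq ht1 htsucc jb hjb η hη ℓ hℓ0 hℓ1 w v hw hv
    (jb n) hj1 n hja hjbnd i hi
  by_cases hcase : tseq (jb n) = 1
  · rw [show Finset.Icc 1 n = Finset.Icc (tseq (jb n)) n by rw [hcase]]
    calc ∑ t ∈ Finset.Icc (tseq (jb n)) n, ((∑ i' ∈ Finset.Icc 1 (jb t), v t i' * ℓ t i') - ℓ t i)
        ≤ hedgeR (jb n) i := hblock
      _ ≤ ∑ j ∈ Finset.Icc 1 (jb n), hedgeR j i :=
          Finset.single_le_sum (fun j _ => hedgeR_nonneg j i)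
            (Finset.mem_Icc.mpr ⟨hj1, le_rfl⟩)
  · have ha2 : 2 ≤ tseq (jb n) := by omega
    set a := tseq (jb n) with ha_def
    set f : ℕ → ℝ := fun t => (∑ i' ∈ Finset.Icc 1 (jb t), v t i' * ℓ t i') - ℓ t i with hf
    have hsplit : ∑ t ∈ Finset.Icc 1 n, f t
        = ∑ t ∈ Finset.Icc 1 (a - 1), f t + ∑ t ∈ Finset.Icc a n, f t := by
      have e1 : Finset.Icc 1 (a - 1) = Finset.Ico 1 a := by
        ext x; simp only [Finset.mem_Icc, Finset.mem_Ico]; omega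
      have e2 : Finset.Icc a n = Finset.Ico a (n + 1) := by
        ext x; simp only [Finset.mem_Icc, Finset.mem_Ico]; omega
      have e3 : Finset.Icc 1 n = Finset.Ico 1 (n + 1) := by
        ext x; simp only [Finset.mem_Icc, Finset.mem_Ico]; omega
      rw [e1, e2, e3]
      exact (Finset.sum_Ico_consecutive f (by omega) (by omega)).symm
    have hprev : jb (a - 1) ≤ jb n - 1 := by
      obtain ⟨p1, p2, p3⟩ := hjb (a - 1) (by omega)
      by_contra hcon
      push_neg at hcon
      have : tseq (jb n) ≤ tseq (jb (a - 1)) :=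
        tseq_mono tseq ht1 htsucc (jb n) (jb (a - 1)) hj1 (by omega)
      omega
    have hIH := ih (a - 1) (by omega) (by omega) i hi
    have hsum2 : ∑ j ∈ Finset.Icc 1 (jb (a - 1)), hedgeR j i
        ≤ ∑ j ∈ Finset.Icc 1 (jb n - 1), hedgeR j i :=
      Finset.sum_le_sum_of_subset_of_nonneg
        (Finset.Icc_subset_Icc_right (by omega)) (fun x _ _ => hedgeR_nonneg x i)
    have hfin : ∑ j ∈ Finset.Icc 1 (jb n - 1), hedgeR j i + hedgeR (jb n) i
        = ∑ j ∈ Finset.Icc 1 (jb n), hedgeR j i := by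
      rw [show Finset.Icc 1 (jb n - 1) = Finset.Ico 1 (jb n) from by
        rw [← Finset.Ico_add_one_right_eq_Icc]; congr 1; omega]
      rw [show Finset.Icc 1 (jb n) = Finset.Ico 1 (jb n + 1) from (Finset.Ico_add_one_right_eq_Icc 1 (jb n)).symm,
        Finset.sum_Ico_succ_top (by omega : 1 ≤ jb n)]
    rw [hsplit]
    linarith

end Det

open MeasureTheory ProbabilityTheory Filter

lemma mgf_le_of_bdd {Ω : Type*} [MeasurableSpace Ω] (μ : Measure Ω) [IsProbabilityMeasure μ]
    (X : Ω → ℝ) (hXm : Measurable X) (hb : ∀ ω, |X ω| ≤ 1)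
    (hmean : ∫ ω, X ω ∂μ = 0) (s : ℝ) (hs : |s| ≤ 1) :
    mgf X μ s ≤ Real.exp (s ^ 2) := by
  have hXint : Integrable X μ := by
    refine Integrable.mono' (integrable_const 1) hXm.aestronglyMeasurable ?_
    exact Filter.Eventually.of_forall fun ω => by simpa using hb ω
  have hX2int : Integrable (fun ω => X ω ^ 2) μ := by
    refine Integrable.mono' (integrable_const 1) (hXm.pow_const 2).aestronglyMeasurable ?_
    refine Filter.Eventually.of_forall fun ω => ?_
    have := hb ω
    rw [Real.norm_eq_abs, abs_pow]
    nlinarith [abs_nonneg (X ω)]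
  have hptw : ∀ ω, Real.exp (s * X ω) ≤ 1 + s * X ω + s ^ 2 * X ω ^ 2 := by
    intro ω
    have habs : |s * X ω| ≤ 1 := by
      rw [abs_mul]
      calc |s| * |X ω| ≤ 1 * 1 := by
            apply mul_le_mul hs (hb ω) (abs_nonneg _) zero_le_one
        _ = 1 := by norm_num
    have hbnd := Real.exp_bound habs (by norm_num : 0 < 2)
    have hsum : ∑ m ∈ Finset.range 2, (s * X ω) ^ m / (m.factorial : ℝ) = 1 + s * X ω := by
      simp [Finset.sum_range_succ]
    rw [hsum] at hbnd
    have h2 : |s * X ω| ^ 2 * ((2:ℕ).succ / ((2:ℕ).factorial * (2:ℕ) : ℝ)) ≤ (s * X ω) ^ 2 := by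
      rw [sq_abs]
      have : ((2:ℕ).succ / ((2:ℕ).factorial * (2:ℕ) : ℝ)) = 3 / 4 := by norm_num [Nat.factorial]
      rw [this]
      nlinarith [sq_nonneg (s * X ω)]
    have h3 : (s * X ω) ^ 2 = s ^ 2 * X ω ^ 2 := by ring
    have := abs_le.mp hbnd
    nlinarith
  have hint_exp : Integrable (fun ω => Real.exp (s * X ω)) μ := by
    refine Integrable.mono' (integrable_const (Real.exp 1)) ?_ ?_
    · exact (hXm.const_mul s).exp.aestronglyMeasurable
    · refine Filter.Eventually.of_forall fun ω => ?_
      rw [Real.norm_eq_abs, abs_of_pos (Real.exp_pos _)]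
      apply Real.exp_le_exp.mpr
      calc s * X ω ≤ |s * X ω| := le_abs_self _
        _ ≤ 1 := by
            rw [abs_mul]
            calc |s| * |X ω| ≤ 1 * 1 :=
                mul_le_mul hs (hb ω) (abs_nonneg _) zero_le_one
              _ = 1 := by norm_num
  have hX2le : ∫ ω, X ω ^ 2 ∂μ ≤ 1 := by
    calc ∫ ω, X ω ^ 2 ∂μ ≤ ∫ _ω, (1:ℝ) ∂μ := by
          apply integral_mono hX2int (integrable_const 1)
          intro ω
          show X ω ^ 2 ≤ 1
          have h := hb ω
          nlinarith [abs_nonneg (X ω), sq_abs (X ω)]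
      _ = 1 := by simp
  calc mgf X μ s = ∫ ω, Real.exp (s * X ω) ∂μ := rfl
    _ ≤ ∫ ω, (1 + s * X ω + s ^ 2 * X ω ^ 2) ∂μ := by
        apply integral_mono hint_exp ?_ hptw
        exact ((integrable_const 1).add (hXint.const_mul s)).add (hX2int.const_mul (s ^ 2))
    _ = 1 + s * ∫ ω, X ω ∂μ + s ^ 2 * ∫ ω, X ω ^ 2 ∂μ := by
        have h1 : Integrable (fun ω => 1 + s * X ω) μ := (integrable_const 1).add (hXint.const_mul s)
        have h2 : Integrable (fun ω => s ^ 2 * X ω ^ 2) μ := hX2int.const_mul (s ^ 2)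
        rw [integral_add h1 h2, integral_add (integrable_const 1) (hXint.const_mul s),
          integral_const, integral_const_mul, integral_const_mul]
        simp
    _ = 1 + s ^ 2 * ∫ ω, X ω ^ 2 ∂μ := by rw [hmean]; ring
    _ ≤ 1 + s ^ 2 := by nlinarith [sq_nonneg s]
    _ ≤ Real.exp (s ^ 2) := by linarith [Real.add_one_le_exp (s ^ 2)]

lemma two_log_le {n : ℕ} (hn : 1 ≤ n) : 2 * Real.log n ≤ (n : ℝ) := by
  have hn1 : (1:ℝ) ≤ (n:ℝ) := by exact_mod_cast hn
  have h0 : (0:ℝ) < (n:ℝ) := by linarith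
  have hsq : Real.sqrt (n:ℝ) > 0 := Real.sqrt_pos.mpr h0
  have hlog : Real.log (Real.sqrt (n:ℝ)) = Real.log (n:ℝ) / 2 := Real.log_sqrt h0.le
  have h1 : Real.log (Real.sqrt (n:ℝ)) ≤ Real.sqrt (n:ℝ) - 1 := Real.log_le_sub_one_of_pos hsq
  have h2 : Real.sqrt (n:ℝ) ^ 2 = (n:ℝ) := Real.sq_sqrt h0.le
  nlinarith [sq_nonneg (Real.sqrt (n:ℝ) - 2)]

lemma prob_dev {Ω : Type*} [MeasurableSpace Ω] (μ : Measure Ω) [IsProbabilityMeasure μ]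
    (X : ℕ → Ω → ℝ) (hXm : ∀ t, Measurable (X t))
    (hXb : ∀ t ω, |X t ω| ≤ 1)
    (hX0 : ∀ t, ∫ ω, X t ω ∂μ = 0)
    (hind : iIndepFun (m := fun _ : ℕ => (inferInstance : MeasurableSpace ℝ)) X μ) :
    ∀ᵐ ω ∂μ, ∀ᶠ n in atTop, ∑ t ∈ Finset.Icc 1 n, X t ω < Real.sqrt (8 * n * Real.log n) := by
  set A : ℕ → Set Ω := fun n => {ω | Real.sqrt (8 * n * Real.log n) ≤ ∑ t ∈ Finset.Icc 1 n, X t ω}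
    with hA
  have hbound : ∀ n, μ (A n) ≤ ENNReal.ofReal (4 / ((n:ℝ) + 1) ^ 2) := by
    intro n
    rcases Nat.eq_zero_or_pos n with rfl | hn
    · calc μ (A 0) ≤ 1 := prob_le_one
        _ ≤ ENNReal.ofReal (4 / (((0:ℕ):ℝ) + 1) ^ 2) := by
            rw [show (4:ℝ) / (((0:ℕ):ℝ) + 1) ^ 2 = 4 by norm_num]
            exact ENNReal.one_le_ofReal.mpr (by norm_num)

    · have hn1 : (1:ℝ) ≤ (n:ℝ) := by exact_mod_cast hn
      have hn0 : (0:ℝ) < (n:ℝ) := by linarith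
      have hlog0 : 0 ≤ Real.log n := Real.log_nonneg hn1
      set s : ℝ := Real.sqrt (2 * Real.log n / n) with hs_def
      have hs0 : 0 ≤ s := Real.sqrt_nonneg _
      have hs2 : s ^ 2 = 2 * Real.log n / n := Real.sq_sqrt (by positivity)
      have hs1 : |s| ≤ 1 := by
        rw [abs_of_nonneg hs0]
        have h2l := two_log_le hn
        have : s ^ 2 ≤ 1 := by
          rw [hs2]
          rw [div_le_one hn0]
          linarith
        nlinarith
      set ε : ℝ := Real.sqrt (8 * n * Real.log n) with hε_def
      have hε0 : 0 ≤ ε := Real.sqrt_nonneg _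
      have hε2 : ε ^ 2 = 8 * n * Real.log n := Real.sq_sqrt (by positivity)
      -- s * ε = 4 log n
      have hse : s * ε = 4 * Real.log n := by
        rw [hs_def, hε_def, ← Real.sqrt_mul (by positivity)]
        rw [show 2 * Real.log n / n * (8 * n * Real.log n) = (4 * Real.log n) ^ 2 * (n / n) by ring]
        rw [div_self hn0.ne', mul_one]
        exact Real.sqrt_sq (by positivity)
      have hint : ∀ t, Integrable (fun ω => Real.exp (s * X t ω)) μ := by
        intro t
        refine Integrable.mono' (integrable_const (Real.exp 1)) ?_ ?_
        · exact ((hXm t).const_mul s).exp.aestronglyMeasurable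
        · refine Filter.Eventually.of_forall fun ω => ?_
          rw [Real.norm_eq_abs, abs_of_pos (Real.exp_pos _)]
          apply Real.exp_le_exp.mpr
          calc s * X t ω ≤ |s * X t ω| := le_abs_self _
            _ ≤ 1 := by
                rw [abs_mul]
                calc |s| * |X t ω| ≤ 1 * 1 :=
                    mul_le_mul hs1 (hXb t ω) (abs_nonneg _) zero_le_one
                  _ = 1 := by norm_num
      have hintS : Integrable (fun ω => Real.exp (s * (∑ t ∈ Finset.Icc 1 n, X t) ω)) μ :=
        hind.integrable_exp_mul_sum hXm (fun t _ => hint t)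
      have hchern := measure_ge_le_exp_mul_mgf (X := ∑ t ∈ Finset.Icc 1 n, X t) (μ := μ) ε hs0 hintS
      have hmgf : mgf (∑ t ∈ Finset.Icc 1 n, X t) μ s ≤ Real.exp ((n:ℝ) * s ^ 2) := by
        rw [hind.mgf_sum hXm]
        calc ∏ t ∈ Finset.Icc 1 n, mgf (X t) μ s
            ≤ ∏ _t ∈ Finset.Icc 1 n, Real.exp (s ^ 2) := by
              apply Finset.prod_le_prod (fun t _ => mgf_nonneg)
              intro t _
              exact mgf_le_of_bdd μ (X t) (hXm t) (hXb t) (hX0 t) s hs1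
          _ = Real.exp ((n:ℝ) * s ^ 2) := by
              rw [Finset.prod_const, ← Real.exp_nat_mul, Nat.card_Icc]
              norm_num
      have hA_eq : A n = {ω | ε ≤ (∑ t ∈ Finset.Icc 1 n, X t) ω} := by
        rw [hA]
        simp only [Finset.sum_apply]
        rfl
      have hns2 : (n:ℝ) * s ^ 2 = 2 * Real.log n := by
        rw [hs2]
        field_simp
      have hcalc : Real.exp (-s * ε) * Real.exp ((n:ℝ) * s ^ 2) = Real.exp (-(2 * Real.log n)) := by
        rw [← Real.exp_add, hns2]
        congr 1
        rw [neg_mul, hse]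
        ring
      have hfinal : (μ (A n)).toReal ≤ Real.exp (-(2 * Real.log n)) := by
        rw [hA_eq]
        calc (μ {ω | ε ≤ (∑ t ∈ Finset.Icc 1 n, X t) ω}).toReal
            ≤ Real.exp (-s * ε) * mgf (∑ t ∈ Finset.Icc 1 n, X t) μ s := hchern
          _ ≤ Real.exp (-s * ε) * Real.exp ((n:ℝ) * s ^ 2) := by
              apply mul_le_mul_of_nonneg_left hmgf (Real.exp_pos _).le
          _ = Real.exp (-(2 * Real.log n)) := hcalc
      have hexp_eq : Real.exp (-(2 * Real.log n)) = 1 / (n:ℝ) ^ 2 := by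
        rw [Real.exp_neg, show 2 * Real.log n = Real.log n + Real.log n by ring, Real.exp_add,
          Real.exp_log hn0]
        field_simp
      have hle : (1:ℝ) / (n:ℝ) ^ 2 ≤ 4 / ((n:ℝ) + 1) ^ 2 := by
        rw [div_le_div_iff₀ (by positivity) (by positivity)]
        nlinarith
      calc μ (A n) = ENNReal.ofReal ((μ (A n)).toReal) := (ENNReal.ofReal_toReal (measure_ne_top μ _)).symm
        _ ≤ ENNReal.ofReal (4 / ((n:ℝ) + 1) ^ 2) := by
            apply ENNReal.ofReal_le_ofReal
            rw [hexp_eq] at hfinal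
            linarith
  have hsummable : Summable (fun n : ℕ => 4 / ((n:ℝ) + 1) ^ 2) := by
    have h := Real.summable_one_div_nat_pow.mpr (by norm_num : 1 < 2)
    have h2 := (summable_nat_add_iff 1).mpr h
    have h3 := h2.mul_left 4
    apply h3.congr
    intro n
    push_cast
    ring
  have htsum : ∑' n, μ (A n) ≠ ⊤ := by
    apply ne_top_of_le_ne_top ?_ (ENNReal.tsum_le_tsum hbound)
    rw [← ENNReal.ofReal_tsum_of_nonneg (fun n => by positivity) hsummable]
    exact ENNReal.ofReal_ne_top
  filter_upwards [MeasureTheory.ae_eventually_notMem htsum] with ω hω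
  filter_upwards [hω] with n hn
  rw [hA] at hn
  simp only [Set.mem_setOf_eq, not_le] at hn
  exact hn


lemma le_of_sq_le_sq3 {a b : ℝ} (hb : 0 ≤ b) (h : a^2 ≤ b^2) : a ≤ b := by
  nlinarith [sq_nonneg (a - b), sq_nonneg (a + b)]

set_option maxHeartbeats 1000000 in
lemma final_numeric_real (x q L SL Jr iR : ℝ)
    (hx4 : 4 ≤ x) (hq0 : 0 < q) (hq4 : q ^ 4 = x) (hL1 : 1 ≤ L)
    (hSL0 : 0 ≤ SL) (hSL2 : SL ^ 2 = L)
    (hJr1 : 1 ≤ Jr) (hJrx : Jr ≤ x) (hJr2 : (Jr - 1) ^ 2 ≤ 2 * x)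
    (hi0 : 0 ≤ iR) (hiq : iR ≤ q)
    (hlogJr0 : 0 ≤ Real.log Jr) (hlogJr : Real.log Jr ≤ L) :
    iR * iR + 5 * Jr * Real.sqrt (Jr * Real.log Jr) + Real.sqrt (8 * x * L)
      ≤ 19 * q ^ 3 * SL := by
  have hq1 : 1 ≤ q := by
    by_contra h
    push_neg at h
    have : q ^ 4 < 1 := pow_lt_one₀ hq0.le h (by norm_num)
    linarith
  have hSL1 : 1 ≤ SL := by nlinarith
  have hsqx2 : (2:ℝ) ≤ q ^ 2 := by nlinarith [sq_nonneg (q ^ 2 - 2)]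
  have hJrq : Jr ≤ 2 * q ^ 2 := by
    have h1 : Jr - 1 ≤ Real.sqrt (2 * x) := by
      apply le_of_sq_le_sq3 (Real.sqrt_nonneg _)
      rw [Real.sq_sqrt (by linarith : (0:ℝ) ≤ 2 * x)]
      exact hJr2
    have h2 : Real.sqrt (2 * x) ≤ 1.5 * q ^ 2 := by
      apply le_of_sq_le_sq3 (by positivity)
      rw [Real.sq_sqrt (by linarith : (0:ℝ) ≤ 2 * x)]
      nlinarith [sq_nonneg q, sq_nonneg (q ^ 2)]
    linarith
  have hB : Real.sqrt (Jr * Real.log Jr) ≤ 1.42 * q * SL := by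
    apply le_of_sq_le_sq3 (by positivity)
    rw [Real.sq_sqrt (by positivity)]
    have h1 : Jr * Real.log Jr ≤ (2 * q ^ 2) * L :=
      mul_le_mul hJrq hlogJr hlogJr0 (by positivity)
    nlinarith [sq_nonneg q, sq_nonneg SL]
  have hC : Real.sqrt (8 * x * L) ≤ 3 * q ^ 2 * SL := by
    apply le_of_sq_le_sq3 (by positivity)
    rw [Real.sq_sqrt (by nlinarith : (0:ℝ) ≤ 8 * x * L)]
    nlinarith [sq_nonneg q]
  have hA : iR * iR ≤ q ^ 2 := by nlinarith
  have hq23 : q ^ 2 ≤ q ^ 3 := by nlinarith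
  have hq3SL0 : q ^ 3 ≤ q ^ 3 * SL := by nlinarith [mul_nonneg (by positivity : (0:ℝ) ≤ q ^ 3) (by linarith : (0:ℝ) ≤ SL - 1)]
  have htot1 : iR * iR ≤ q ^ 3 * SL := by linarith
  have htot2 : 5 * Jr * Real.sqrt (Jr * Real.log Jr) ≤ 14.2 * (q ^ 3 * SL) := by
    calc 5 * Jr * Real.sqrt (Jr * Real.log Jr) ≤ 5 * (2 * q ^ 2) * (1.42 * q * SL) := by
          apply mul_le_mul (by nlinarith) hB (Real.sqrt_nonneg _) (by positivity)
      _ = 14.2 * (q ^ 3 * SL) := by ring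
  have hq3SL : 0 ≤ q ^ 3 * SL := by positivity
  have hq2SL : q ^ 2 * SL ≤ q ^ 3 * SL := by
    nlinarith [mul_nonneg (sub_nonneg.mpr hq23) hSL0]
  have htot3 : Real.sqrt (8 * x * L) ≤ 3 * (q ^ 3 * SL) := by linarith
  linarith [htot1, htot2, htot3, hq3SL]

lemma final_numeric (J i n : ℕ) (hJ : 1 ≤ J) (hi : 1 ≤ i) (hn : 4 ≤ n) (hJn : J ≤ n)
    (hJ2 : (J - 1) * (J - 1) ≤ 2 * n) (hiq : (i : ℝ) ≤ (n : ℝ) ^ ((1 : ℝ) / 4)) :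
    (i:ℝ) * i + 5 * J * Real.sqrt ((J:ℝ) * Real.log J) + Real.sqrt (8 * n * Real.log n)
      ≤ 19 * (n : ℝ) ^ ((3 : ℝ) / 4) * Real.sqrt (Real.log n) := by
  have hx4 : (4:ℝ) ≤ (n:ℝ) := by exact_mod_cast hn
  have hx0 : (0:ℝ) < (n:ℝ) := by linarith
  have hq0 : 0 < (n:ℝ) ^ ((1:ℝ)/4) := Real.rpow_pos_of_pos hx0 _
  have hq4 : ((n:ℝ) ^ ((1:ℝ)/4)) ^ 4 = (n:ℝ) := by
    rw [← Real.rpow_natCast ((n:ℝ) ^ ((1:ℝ)/4)) 4, ← Real.rpow_mul hx0.le]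
    norm_num
  have hq3 : (n:ℝ) ^ ((3:ℝ)/4) = ((n:ℝ) ^ ((1:ℝ)/4)) ^ 3 := by
    rw [← Real.rpow_natCast ((n:ℝ) ^ ((1:ℝ)/4)) 3, ← Real.rpow_mul hx0.le]
    norm_num
  have hL1 : 1 ≤ Real.log n := by
    rw [← Real.log_exp 1]
    apply Real.log_le_log (Real.exp_pos 1)
    have := Real.exp_one_lt_d9
    linarith
  have hJr1 : (1:ℝ) ≤ (J:ℝ) := by exact_mod_cast hJ
  have hJrx : (J:ℝ) ≤ (n:ℝ) := by exact_mod_cast hJn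
  have hJr2 : ((J:ℝ) - 1) ^ 2 ≤ 2 * (n:ℝ) := by
    have hcast : ((J - 1 : ℕ) : ℝ) = (J:ℝ) - 1 := by
      push_cast [Nat.cast_sub hJ]
      ring
    have h2 : ((J - 1 : ℕ) : ℝ) * ((J - 1 : ℕ) : ℝ) ≤ 2 * (n:ℝ) := by exact_mod_cast hJ2
    rw [hcast] at h2
    nlinarith
  rw [hq3]
  exact final_numeric_real (n:ℝ) ((n:ℝ) ^ ((1:ℝ)/4)) (Real.log n) (Real.sqrt (Real.log n))
    (J:ℝ) (i:ℝ) hx4 hq0 hq4 hL1 (Real.sqrt_nonneg _) (Real.sq_sqrt (by linarith))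
    hJr1 hJrx hJr2 (Nat.cast_nonneg i) hiq
    (Real.log_nonneg hJr1) (Real.log_le_log (by linarith) hJrx)

open MeasureTheory ProbabilityTheory Filter

theorem stmt_13 {Ω : Type*} [MeasurableSpace Ω] (μ : Measure Ω) [IsProbabilityMeasure μ]
    {𝒴 : Type*} [MetricSpace 𝒴] [m𝒴 : MeasurableSpace 𝒴] [BorelSpace 𝒴]
    (hbd : ∀ a b : 𝒴, dist a b ≤ 1)
    (y : ℕ → 𝒴) (z : ℕ → ℕ → 𝒴)
    (tseq : ℕ → ℕ) (ht1 : tseq 1 = 1) (htsucc : ∀ j ≥ 1, tseq (j + 1) = tseq j + j)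
    (jb : ℕ → ℕ) (hjb : ∀ t ≥ 1, 1 ≤ jb t ∧ tseq (jb t) ≤ t ∧ t < tseq (jb t + 1))
    (η : ℕ → ℝ) (hη : ∀ j ≥ 1, η j = Real.sqrt ((8 / (j : ℝ)) * Real.log j))
    (w : ℕ → ℕ → ℝ)
    (hw : ∀ t ≥ 1, ∀ i, w t i = (1 / (jb t : ℝ)) *
        Real.exp (-(η (jb t)) * ∑ s ∈ Finset.Icc (tseq (jb t)) (t - 1), dist (z s i) (y s)))
    (v : ℕ → ℕ → ℝ)
    (hv : ∀ t ≥ 1, ∀ i, v t i = w t i / ∑ i' ∈ Finset.Icc 1 (jb t), w t i')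
    (zh : ℕ → Ω → 𝒴) (hmeas : ∀ t, Measurable (zh t))
    (hindep : iIndepFun (m := fun _ : ℕ => m𝒴) zh μ)
    (hlaw : ∀ t ≥ 1, Measure.map (zh t) μ
        = ∑ i ∈ Finset.Icc 1 (jb t), ENNReal.ofReal (v t i) • Measure.dirac (z t i)) :
    ∀ᵐ ω ∂μ, ∃ n0 : ℕ, ∀ n > n0, ∀ i : ℕ, 1 ≤ i → (i : ℝ) ≤ (n : ℝ) ^ ((1 : ℝ) / 4) →
      ∑ t ∈ Finset.Icc 1 n, dist (zh t ω) (y t)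
        ≤ ∑ t ∈ Finset.Icc 1 n, dist (z t i) (y t)
          + 19 * (n : ℝ) ^ ((3 : ℝ) / 4) * Real.sqrt (Real.log n) + (n0 : ℝ) := by
  classical
  -- loss function
  have hℓ0 : ∀ (t i : ℕ), 0 ≤ dist (z t i) (y t) := fun t i => dist_nonneg
  have hℓ1 : ∀ (t i : ℕ), dist (z t i) (y t) ≤ 1 := fun t i => hbd _ _
  -- measurability of losses
  have hgm : ∀ t, Measurable (fun ζ : 𝒴 => dist ζ (y t)) := fun t =>
    (continuous_id.dist continuous_const).measurable
  have hDm : ∀ t, Measurable (fun ω => dist (zh t ω) (y t)) := fun t =>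
    (hgm t).comp (hmeas t)
  have hDint : ∀ t, Integrable (fun ω => dist (zh t ω) (y t)) μ := by
    intro t
    refine Integrable.mono' (integrable_const 1) (hDm t).aestronglyMeasurable ?_
    refine Filter.Eventually.of_forall fun ω => ?_
    rw [Real.norm_eq_abs, abs_of_nonneg dist_nonneg]
    exact hbd _ _
  -- the means
  set c : ℕ → ℝ := fun t => ∫ ω, dist (zh t ω) (y t) ∂μ with hc_def
  have hc0 : ∀ t, 0 ≤ c t := fun t => integral_nonneg fun ω => dist_nonneg
  have hc1 : ∀ t, c t ≤ 1 := by
    intro t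
    calc c t ≤ ∫ _ω, (1:ℝ) ∂μ := integral_mono (hDint t) (integrable_const 1)
          (fun ω => hbd _ _)
      _ = 1 := by simp
  -- mean identity
  have hmean_eq : ∀ t, 1 ≤ t →
      c t = ∑ i' ∈ Finset.Icc 1 (jb t), v t i' * dist (z t i') (y t) := by
    intro t ht
    have hint_dirac : ∀ x : 𝒴, Integrable (fun ζ : 𝒴 => dist ζ (y t)) (Measure.dirac x) := by
      intro x
      refine Integrable.mono' (integrable_const 1)
        (hgm t).aestronglyMeasurable ?_
      refine Filter.Eventually.of_forall fun ζ => ?_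
      rw [Real.norm_eq_abs, abs_of_nonneg dist_nonneg]
      exact hbd _ _
    have hmap : c t = ∫ ζ, dist ζ (y t) ∂(Measure.map (zh t) μ) :=
      (integral_map (hmeas t).aemeasurable (hgm t).aestronglyMeasurable).symm
    rw [hmap, hlaw t ht, integral_finset_sum_measure (fun i' _ =>
      (hint_dirac (z t i')).smul_measure ENNReal.ofReal_ne_top)]
    apply Finset.sum_congr rfl
    intro i' hi'
    rw [integral_smul_measure,
      integral_dirac' (fun ζ : 𝒴 => dist ζ (y t)) (z t i') (hgm t).stronglyMeasurable,
      ENNReal.toReal_ofReal (vnonneg tseq jb hjb η (fun s i => dist (z s i) (y s)) w v hw hv t ht i'),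
      smul_eq_mul]
  -- centered random variables
  set X : ℕ → Ω → ℝ := fun t => (fun ζ : 𝒴 => dist ζ (y t) - c t) ∘ zh t with hX_def
  have hXm : ∀ t, Measurable (X t) := fun t =>
    (((continuous_id.dist continuous_const).sub continuous_const).measurable).comp (hmeas t)
  have hXval : ∀ t ω, X t ω = dist (zh t ω) (y t) - c t := fun t ω => rfl
  have hXb : ∀ t ω, |X t ω| ≤ 1 := by
    intro t ω
    rw [hXval]
    rw [abs_le]
    constructor
    · have := hc1 t
      have : (0:ℝ) ≤ dist (zh t ω) (y t) := dist_nonneg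
      linarith [hc1 t]
    · linarith [hbd (zh t ω) (y t), hc0 t]
  have hX0 : ∀ t, ∫ ω, X t ω ∂μ = 0 := by
    intro t
    have : ∫ ω, X t ω ∂μ = ∫ ω, (dist (zh t ω) (y t) - c t) ∂μ := rfl
    rw [this, integral_sub (hDint t) (integrable_const (c t)), integral_const]
    simp
    exact sub_self _
  have hind' : iIndepFun (m := fun _ : ℕ => (inferInstance : MeasurableSpace ℝ)) X μ :=
    hindep.comp (fun t ζ => dist ζ (y t) - c t)
      (fun t => ((continuous_id.dist continuous_const).sub continuous_const).measurable)
  have hdev := prob_dev μ X hXm hXb hX0 hind'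
  -- deterministic bound
  have hdet := det_global tseq ht1 htsucc jb hjb η hη
    (fun s i => dist (z s i) (y s)) hℓ0 hℓ1 w v hw hv
  -- assemble
  filter_upwards [hdev] with ω hω
  obtain ⟨N, hN⟩ := Filter.eventually_atTop.mp hω
  refine ⟨max N 4, ?_⟩
  intro n hn i hi1 hiq
  have hmax1 : N ≤ max N 4 := le_max_left _ _
  have hmax2 : 4 ≤ max N 4 := le_max_right _ _
  have hn4 : 4 ≤ n := by omega
  have hn1 : 1 ≤ n := by omega
  -- random part
  have hsplit : ∑ t ∈ Finset.Icc 1 n, dist (zh t ω) (y t)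
      = ∑ t ∈ Finset.Icc 1 n, X t ω + ∑ t ∈ Finset.Icc 1 n, c t := by
    rw [← Finset.sum_add_distrib]
    apply Finset.sum_congr rfl
    intro t _
    rw [hXval]
    ring
  have hdev' : ∑ t ∈ Finset.Icc 1 n, X t ω < Real.sqrt (8 * n * Real.log n) :=
    hN n (by omega)
  have hcsum : ∑ t ∈ Finset.Icc 1 n, c t
      = ∑ t ∈ Finset.Icc 1 n, ∑ i' ∈ Finset.Icc 1 (jb t), v t i' * dist (z t i') (y t) := by
    apply Finset.sum_congr rfl
    intro t ht
    rw [Finset.mem_Icc] at ht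
    exact hmean_eq t ht.1
  have hdet' := hdet n hn1 i hi1
  have hhedge := hedgeR_sum (jb n) i (hjb n hn1).1 hi1
  obtain ⟨hJ1, hJle, _⟩ := hjb n hn1
  have hJn : jb n ≤ n :=
    le_trans (tseq_ge_self tseq ht1 htsucc (jb n) hJ1) hJle
  have hJ2 : (jb n - 1) * (jb n - 1) ≤ 2 * n := by
    have := tseq_lb tseq ht1 htsucc (jb n) hJ1
    omega
  have hnum := final_numeric (jb n) i n hJ1 hi1 hn4 hJn hJ2 hiq
  rw [Finset.sum_sub_distrib] at hdet'
  have hn0 : (0:ℝ) ≤ ((max N 4 : ℕ) : ℝ) := Nat.cast_nonneg _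
  rw [hsplit, hcsum]
  linarith [hdet', hhedge, hnum, hdev']
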